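/- arXiv:2507.07319 — 2 statements merged into one kernel-verified Lean document; each statement's English description precedes it below -/
import Mathlib

section
/- For fixed N ≥ 1 and β ∈ (0,1), the solutions t*(k,β) of (1-β)/N = ∑_{i=0}^{k} C(N,i)(1-t)^i t^{N-i} (for 1 ≤ k ≤ N-1), extended by t*(N,β) = 0, are strictly decreasing in k: if 1 ≤ k < k' ≤ N then t*(k',β) < t*(k,β). -/
open Finset Set

/-- The cumulative distribution function of a Binomial(N, 1-t) random variable at k. -/
noncomputable def binCDF (N k : ℕ) (t : ℝ) : ℝ :=
  ∑ i ∈ Finset.range (k + 1), (N.choose i : ℝ) * (1 - t) ^ i * t ^ (N - i)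

private lemma binCDF_hasDerivAt (N k : ℕ) (t : ℝ) :
    HasDerivAt (binCDF N k)
      ((k + 1 : ℝ) * (N.choose (k + 1) : ℝ) * (1 - t) ^ k * t ^ (N - (k + 1))) t := by
  have key : ∀ i : ℕ, HasDerivAt (fun x : ℝ => (N.choose i : ℝ) * (1 - x) ^ i * x ^ (N - i))
      (((i + 1 : ℝ) * (N.choose (i + 1) : ℝ) * (1 - t) ^ i * t ^ (N - (i + 1)))
        - ((i : ℝ) * (N.choose i : ℝ) * (1 - t) ^ (i - 1) * t ^ (N - i))) t := by
    intro i
    have h1 : HasDerivAt (fun x : ℝ => (1 - x) ^ i)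
        ((i : ℝ) * (1 - t) ^ (i - 1) * (-1)) t := by
      exact (hasDerivAt_pow i (1 - t)).comp t ((hasDerivAt_id t).const_sub 1)
    have h2 : HasDerivAt (fun x : ℝ => x ^ (N - i))
        (((N - i : ℕ) : ℝ) * t ^ (N - i - 1)) t := hasDerivAt_pow (N - i) t
    have h3 := ((h1.const_mul ((N.choose i : ℝ))).mul h2)
    convert h3 using 1
    · rfl
    · rfl
    · rfl
    have hn : (i + 1) * N.choose (i + 1) = (N - i) * N.choose i := by
      rw [mul_comm, Nat.choose_succ_right_eq, mul_comm]
    have hc : ((i : ℝ) + 1) * (N.choose (i + 1) : ℝ)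
        = ((N - i : ℕ) : ℝ) * (N.choose i : ℝ) := by exact_mod_cast hn
    have he : N - (i + 1) = N - i - 1 := by omega
    rw [he, hc]
    ring
  have hsum : HasDerivAt (binCDF N k)
      (∑ i ∈ Finset.range (k + 1),
        (((i + 1 : ℝ) * (N.choose (i + 1) : ℝ) * (1 - t) ^ i * t ^ (N - (i + 1)))
          - ((i : ℝ) * (N.choose i : ℝ) * (1 - t) ^ (i - 1) * t ^ (N - i)))) t := by
    unfold binCDF
    exact HasDerivAt.fun_sum fun i _ => key i
  convert hsum using 1
  have htel := Finset.sum_range_sub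
    (f := fun i => (i : ℝ) * (N.choose i : ℝ) * (1 - t) ^ (i - 1) * t ^ (N - i)) (k + 1)
  push_cast [Nat.add_sub_cancel] at htel
  rw [htel]
  ring

private lemma binCDF_strictMonoOn (N k : ℕ) (hk : k + 1 ≤ N) :
    StrictMonoOn (binCDF N k) (Set.Icc (0 : ℝ) 1) := by
  apply strictMonoOn_of_deriv_pos (convex_Icc 0 1)
  · exact fun x _ => ((binCDF_hasDerivAt N k x).differentiableAt).continuousAt.continuousWithinAt
  · intro x hx
    rw [interior_Icc] at hx
    rw [(binCDF_hasDerivAt N k x).deriv]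
    have h1 : (0 : ℝ) < (N.choose (k + 1) : ℝ) := by
      exact_mod_cast Nat.choose_pos hk
    have h2 : (0 : ℝ) < 1 - x := by linarith [hx.2]
    have h3 : (0 : ℝ) < x := hx.1
    positivity

private lemma binCDF_lt (N k k' : ℕ) (hkk' : k < k') (hk' : k' ≤ N) (x : ℝ)
    (hx : x ∈ Set.Ioo (0 : ℝ) 1) : binCDF N k x < binCDF N k' x := by
  unfold binCDF
  have h2 : (0 : ℝ) < 1 - x := by linarith [hx.2]
  have h3 : (0 : ℝ) < x := hx.1
  apply Finset.sum_lt_sum_of_subset (by simp; omega) (i := k + 1)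
  · simp; omega
  · simp
  · have h1 : (0 : ℝ) < (N.choose (k + 1) : ℝ) := by
      exact_mod_cast Nat.choose_pos (by omega)
    positivity
  · intro j _ _
    positivity

theorem stmt_1 (N : ℕ) (β : ℝ) (hN : 1 ≤ N) (hβ : β ∈ Set.Ioo (0 : ℝ) 1)
    (t : ℕ → ℝ)
    (ht : ∀ k, 1 ≤ k → k ≤ N - 1 →
      t k ∈ Set.Ioo (0 : ℝ) 1 ∧ (1 - β) / N = binCDF N k (t k))
    (htN : t N = 0) :
    ∀ k k', 1 ≤ k → k < k' → k' ≤ N → t k' < t k := by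
  intro k k' hk hkk' hk'N
  have hkN : k ≤ N - 1 := by omega
  obtain ⟨hkmem, hkeq⟩ := ht k hk hkN
  rcases eq_or_lt_of_le hk'N with rfl | hk'lt
  · rw [htN]; exact hkmem.1
  · have hk'N1 : k' ≤ N - 1 := by omega
    obtain ⟨hk'mem, hk'eq⟩ := ht k' (by omega) hk'N1
    have hlt : binCDF N k (t k') < binCDF N k (t k) := by
      calc binCDF N k (t k') < binCDF N k' (t k') := binCDF_lt N k k' hkk' (by omega) _ hk'mem
        _ = binCDF N k (t k) := by rw [← hk'eq, hkeq]
    by_contra h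
    push_neg at h
    have := (binCDF_strictMonoOn N k (by omega)).monotoneOn
      (Set.mem_Icc.mpr ⟨le_of_lt hkmem.1, le_of_lt hkmem.2⟩)
      (Set.mem_Icc.mpr ⟨le_of_lt hk'mem.1, le_of_lt hk'mem.2⟩) h
    linarith
end

section
/- For fixed N ≥ 1 and fixed integer k with 1 ≤ k ≤ N-1, the solution t*(k,β) of (1-β)/N = ∑_{i=0}^{k} C(N,i)(1-t)^i t^{N-i} is strictly decreasing in β on (0,1), and t*(k,β) → 0 as β → 1. -/
open Finset Set Filter

lemma term_deriv (N i : ℕ) (hi : i + 1 ≤ N) (t : ℝ) :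
    HasDerivAt (fun t : ℝ => (N.choose i : ℝ) * (1 - t) ^ i * t ^ (N - i))
      ((((i + 1) * N.choose (i + 1) : ℕ) : ℝ) * (1 - t) ^ i * t ^ (N - (i + 1))
        - ((i * N.choose i : ℕ) : ℝ) * (1 - t) ^ (i - 1) * t ^ (N - i)) t := by
  have h1 : HasDerivAt (fun t : ℝ => (1 - t) ^ i)
      ((i : ℝ) * (1 - t) ^ (i - 1) * (-1)) t :=
    ((hasDerivAt_id t).const_sub 1).pow i
  have h2 : HasDerivAt (fun t : ℝ => t ^ (N - i))
      (((N - i : ℕ) : ℝ) * t ^ (N - i - 1)) t := hasDerivAt_pow (N - i) t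
  have h := (h1.mul h2).const_mul (N.choose i : ℝ)
  convert h using 1
  · ext x; ring
  · rfl
  · ext x; change _ = _ * ((1 - x) ^ i * x ^ _); ring
  have hc : (i + 1) * N.choose (i + 1) = N.choose i * (N - i) := by
    rw [mul_comm]; exact Nat.choose_succ_right_eq N i
  obtain ⟨m, hm⟩ : ∃ m, N = i + 1 + m := ⟨N - (i + 1), by omega⟩
  subst hm
  rw [hc]
  simp only [show i + 1 + m - i = m + 1 from by omega,
    show i + 1 + m - (i + 1) = m from by omega, show m + 1 - 1 = m from rfl]
  push_cast
  ring

lemma hasDerivAt_binCDF (N k : ℕ) (hk : k + 1 ≤ N) (t : ℝ) :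
    HasDerivAt (binCDF N k)
      ((((k + 1) * N.choose (k + 1) : ℕ) : ℝ) * (1 - t) ^ k * t ^ (N - (k + 1))) t := by
  have h := HasDerivAt.fun_sum (fun i hi =>
    term_deriv N i (le_trans (Finset.mem_range.mp hi) hk) t)
  have hsum : ∑ i ∈ Finset.range (k + 1),
      ((((i + 1) * N.choose (i + 1) : ℕ) : ℝ) * (1 - t) ^ i * t ^ (N - (i + 1))
        - ((i * N.choose i : ℕ) : ℝ) * (1 - t) ^ (i - 1) * t ^ (N - i))
      = (((k + 1) * N.choose (k + 1) : ℕ) : ℝ) * (1 - t) ^ k * t ^ (N - (k + 1)) := by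
    set F : ℕ → ℝ := fun i => ((i * N.choose i : ℕ) : ℝ) * (1 - t) ^ (i - 1) * t ^ (N - i)
      with hF
    have hcg : ∀ i ∈ Finset.range (k + 1),
        ((((i + 1) * N.choose (i + 1) : ℕ) : ℝ) * (1 - t) ^ i * t ^ (N - (i + 1))
          - ((i * N.choose i : ℕ) : ℝ) * (1 - t) ^ (i - 1) * t ^ (N - i))
        = F (i + 1) - F i := by
      intro i _
      simp [hF]
    rw [Finset.sum_congr rfl hcg, Finset.sum_range_sub F]
    simp [hF]
  rw [hsum] at h
  exact h

lemma continuous_binCDF (N k : ℕ) : Continuous (binCDF N k) := by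
  unfold binCDF
  exact continuous_finset_sum _ fun i _ => by fun_prop

lemma strictMonoOn_binCDF (N k : ℕ) (hk : k + 1 ≤ N) :
    StrictMonoOn (binCDF N k) (Set.Icc 0 1) := by
  apply strictMonoOn_of_deriv_pos (convex_Icc (0 : ℝ) 1)
    (continuous_binCDF N k).continuousOn
  intro x hx
  rw [interior_Icc] at hx
  rw [(hasDerivAt_binCDF N k hk x).deriv]
  have h1 : (0 : ℝ) < 1 - x := by linarith [hx.2]
  have h2 : 0 < (k + 1) * N.choose (k + 1) := by
    have := Nat.choose_pos hk
    positivity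
  have h3 : (0 : ℝ) < x := hx.1
  positivity

lemma binCDF_zero (N k : ℕ) (hk : k + 1 ≤ N) : binCDF N k 0 = 0 := by
  unfold binCDF
  apply Finset.sum_eq_zero
  intro i hi
  simp only [Finset.mem_range] at hi
  rw [zero_pow (by omega : N - i ≠ 0)]
  ring

theorem stmt_2 (N k : ℕ) (hN : 1 ≤ N) (hk1 : 1 ≤ k) (hk2 : k ≤ N - 1)
    (t : ℝ → ℝ)
    (ht : ∀ β ∈ Set.Ioo (0 : ℝ) 1,
      t β ∈ Set.Ioo (0 : ℝ) 1 ∧ (1 - β) / N = binCDF N k (t β)) :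
    StrictAntiOn t (Set.Ioo 0 1) ∧
    Filter.Tendsto t (nhdsWithin 1 (Set.Ioo (0 : ℝ) 1)) (nhds 0) := by
  have hkN : k + 1 ≤ N := by omega
  have hNpos : (0 : ℝ) < N := by exact_mod_cast hN
  have hmono := strictMonoOn_binCDF N k hkN
  constructor
  · intro β1 h1 β2 h2 h12
    obtain ⟨hm1, he1⟩ := ht β1 h1
    obtain ⟨hm2, he2⟩ := ht β2 h2
    have hlt : binCDF N k (t β2) < binCDF N k (t β1) := by
      rw [← he1, ← he2]
      gcongr
    exact (hmono.lt_iff_lt ⟨hm2.1.le, hm2.2.le⟩ ⟨hm1.1.le, hm1.2.le⟩).mp hlt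
  · rw [tendsto_order]
    constructor
    · intro a ha
      filter_upwards [self_mem_nhdsWithin] with β hβ
      exact lt_trans ha (ht β hβ).1.1
    · intro a ha
      set ε : ℝ := min a 1 / 2 with hε
      have hε0 : 0 < ε := by positivity
      have hε1 : ε < 1 := by
        have : min a 1 ≤ 1 := min_le_right a 1
        simp only [hε]; linarith
      have hεa : ε ≤ a := by
        have : min a 1 ≤ a := min_le_left a 1
        simp only [hε]; linarith
      have hc : 0 < binCDF N k ε := by
        have := hmono (Set.mem_Icc.mpr ⟨le_refl 0, zero_le_one⟩)
          (Set.mem_Icc.mpr ⟨hε0.le, hε1.le⟩) hε0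
        rwa [binCDF_zero N k hkN] at this
      have htend : Tendsto (fun β : ℝ => (1 - β) / N) (nhdsWithin 1 (Set.Ioo (0:ℝ) 1))
          (nhds 0) := by
        have hco : Continuous fun β : ℝ => (1 - β) / N := by fun_prop
        have := (hco.tendsto 1).mono_left
          (nhdsWithin_le_nhds (s := Set.Ioo (0:ℝ) 1))
        simpa using this
      have hev : ∀ᶠ β in nhdsWithin 1 (Set.Ioo (0:ℝ) 1), (1 - β) / N < binCDF N k ε :=
        htend (Iio_mem_nhds hc)
      filter_upwards [hev, self_mem_nhdsWithin] with β hβ1 hβ2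
      obtain ⟨hm, he⟩ := ht β hβ2
      have : binCDF N k (t β) < binCDF N k ε := by rw [← he]; exact hβ1
      have htβ : t β < ε :=
        (hmono.lt_iff_lt ⟨hm.1.le, hm.2.le⟩ ⟨hε0.le, hε1.le⟩).mp this
      linarith
end
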